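/- Let m > 1, let a, M, Λ > 0 with a ≤ Λ, and let H : ℝ^d → ℝ be a convex function satisfying a·|p|^m − M ≤ H(p) ≤ Λ(|p|^m + 1) for all p. Let 1 < τ ≤ 3/2. Then there exist constants c > 0 and C > 0 (depending only on m, a, M, Λ) and a choice of β ∈ (0, 1/2) such that for every p ∈ ℝ^d, (1/τ)·H(τ·p) − H(p) ≥ (τ−1)·(c·|p|^m − C). -/

import Mathlib

theorem stmt_3 (d : ℕ) (m a M Λ : ℝ) (hm : 1 < m) (ha : 0 < a) (hM : 0 < M)
    (hΛ : 0 < Λ) (haΛ : a ≤ Λ)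
    (H : EuclideanSpace ℝ (Fin d) → ℝ) (hH : ConvexOn ℝ Set.univ H)
    (hlow : ∀ p, a * ‖p‖ ^ m - M ≤ H p)
    (hup : ∀ p, H p ≤ Λ * (‖p‖ ^ m + 1))
    (τ : ℝ) (hτ1 : 1 < τ) (hτ2 : τ ≤ 3 / 2) :
    ∃ c > 0, ∃ C > 0, ∃ β ∈ Set.Ioo (0 : ℝ) (1 / 2),
      ∀ p : EuclideanSpace ℝ (Fin d),
        (1 / τ) * H (τ • p) - H p ≥ (τ - 1) * (c * ‖p‖ ^ m - C) := by
  have hm1 : (0:ℝ) < m - 1 := by linarith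
  have hΛ2 : (0:ℝ) < a / (2*Λ) := by positivity
  set β : ℝ := min (1/4) ((a/(2*Λ)) ^ (1/(m-1))) with hβdef
  have hβpos : 0 < β := lt_min (by norm_num) (Real.rpow_pos_of_pos hΛ2 _)
  have hβle : β ≤ 1/4 := min_le_left _ _
  have hβlt : β < 1/2 := lt_of_le_of_lt hβle (by norm_num)
  have h1β : (0:ℝ) < 1 - β := by linarith
  have hτpos : (0:ℝ) < τ := by linarith
  have hτβ : (0:ℝ) < τ - β := by linarith
  -- key smallness of β : Λ * β^m ≤ (a/2) * β
  have hβm1 : β ^ (m-1) ≤ a/(2*Λ) := by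
    calc β ^ (m-1) ≤ ((a/(2*Λ)) ^ (1/(m-1))) ^ (m-1) :=
          Real.rpow_le_rpow hβpos.le (min_le_right _ _) hm1.le
      _ = (a/(2*Λ)) ^ ((1/(m-1))*(m-1)) := (Real.rpow_mul hΛ2.le _ _).symm
      _ = a/(2*Λ) := by
          rw [one_div, inv_mul_cancel₀ (ne_of_gt hm1), Real.rpow_one]
  have hβmsplit : β ^ (m-1) = β ^ m / β := by
    rw [Real.rpow_sub hβpos, Real.rpow_one]
  have hβkey : Λ * β ^ m ≤ a/2 * β := by
    rw [hβmsplit, div_le_div_iff₀ hβpos (by positivity : (0:ℝ) < 2*Λ)] at hβm1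
    nlinarith [Real.rpow_pos_of_pos hβpos m]
  clear_value β
  clear hβdef hβm1 hβmsplit
  refine ⟨a*β/3, by positivity, 2*(M+Λ), by positivity, β,
    Set.mem_Ioo.mpr ⟨hβpos, hβlt⟩, ?_⟩
  intro p
  have ht : (0:ℝ) ≤ ‖p‖ ^ m := Real.rpow_nonneg (norm_nonneg p) m
  set t : ℝ := ‖p‖ ^ m with htdef
  set A : ℝ := H (τ • p) with hA
  set B : ℝ := H p with hB
  set D : ℝ := H (β • p) with hD
  -- convexity step
  have hu : (0:ℝ) ≤ (1-β)/(τ-β) := by positivity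
  have hv : (0:ℝ) ≤ (τ-1)/(τ-β) := div_nonneg (by linarith) hτβ.le
  have huv : (1-β)/(τ-β) + (τ-1)/(τ-β) = 1 := by
    field_simp
    ring
  have hconv := hH.2 (Set.mem_univ (τ • p)) (Set.mem_univ (β • p)) hu hv huv
  have hcomb : ((1-β)/(τ-β)) • (τ • p) + ((τ-1)/(τ-β)) • (β • p) = p := by
    rw [smul_smul, smul_smul, ← add_smul]
    have : (1-β)/(τ-β) * τ + (τ-1)/(τ-β) * β = 1 := by
      field_simp; ring
    rw [this, one_smul]
  rw [hcomb] at hconv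
  -- step1 : (τ-β)*B ≤ (1-β)*A + (τ-1)*D
  have step1 : (τ-β)*B ≤ (1-β)*A + (τ-1)*D := by
    have h := hconv
    simp only [smul_eq_mul] at h
    rw [div_mul_eq_mul_div, div_mul_eq_mul_div, ← add_div,
      le_div_iff₀ hτβ] at h
    linarith [h]
  -- bounds on B and D
  have hBlow : a * t - M ≤ B := hlow p
  have hnorm : ‖β • p‖ = β * ‖p‖ := by
    rw [norm_smul, Real.norm_eq_abs, abs_of_pos hβpos]
  have hDt : ‖β • p‖ ^ m = β ^ m * t := by
    rw [hnorm, Real.mul_rpow hβpos.le (norm_nonneg p)]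
  have hDup : D ≤ Λ * (β ^ m * t + 1) := by
    have := hup (β • p)
    rwa [hDt] at this
  -- good term estimate
  have hX : a*β/2 * t - (M+Λ) ≤ β*B - D := by
    linarith [mul_le_mul_of_nonneg_right hβkey ht,
      mul_le_mul_of_nonneg_left hBlow hβpos.le, hDup,
      mul_nonneg (by linarith : (0:ℝ) ≤ 1-β) hM.le]
  -- scalar key inequality
  have h12 : (1:ℝ)/2 < τ*(1-β) := by
    linarith [mul_nonneg (by linarith : (0:ℝ) ≤ τ-1) h1β.le, hβlt]
  have h32 : τ*(1-β) ≤ 3/2 := by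
    linarith [mul_nonneg (by linarith : (0:ℝ) ≤ 3/2 - τ) h1β.le, hβpos.le]
  have hkey : τ*(1-β)*(a*β/3*t - 2*(M+Λ)) ≤ β*B - D := by
    rcases le_or_gt (a*β/3*t - 2*(M+Λ)) 0 with hc | hc
    · linarith [mul_nonneg (by linarith : (0:ℝ) ≤ τ*(1-β) - 1/2)
        (by linarith : (0:ℝ) ≤ -(a*β/3*t - 2*(M+Λ))),
        hX, mul_nonneg (mul_nonneg ha.le hβpos.le) ht]
    · linarith [mul_nonneg (by linarith : (0:ℝ) ≤ 3/2 - τ*(1-β)) hc.le,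
        hX, mul_nonneg (mul_nonneg ha.le hβpos.le) ht]
  -- assemble
  have h5 : τ*(1-β)*(τ-1)*(a*β/3*t - 2*(M+Λ)) ≤ (1-β)*A - τ*(1-β)*B := by
    have hmul := mul_le_mul_of_nonneg_left hkey (by linarith : (0:ℝ) ≤ τ-1)
    linarith [step1, hmul]
  rw [ge_iff_le, ← sub_nonneg]
  have heq : (1/τ)*A - B - (τ-1)*(a*β/3*t - 2*(M+Λ)) =
      ((1-β)*A - τ*(1-β)*B - τ*(1-β)*(τ-1)*(a*β/3*t - 2*(M+Λ))) / (τ*(1-β)) := by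
    field_simp
  rw [heq]
  exact div_nonneg (by linarith) (by positivity)
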